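/- For q ∈ (0,1), let ι_q(X_q) ⊆ ℝ be the image of X_q under ι_q(x) = d_q(1,x) − π/2; concretely, ι_q(X_q) = { ∑_{k=0}^{n−1} 1/ρ_q(k) − π/2 : n ∈ ℕ₀ } ∪ { ∑_{k=0}^∞ 1/ρ_q(k) − π/2 }. Then the Hausdorff distance in ℝ between ι_q(X_q) and the interval [−π/2, π/2] tends to 0 as q → 1⁻. -/

import Mathlib

open Real Set Metric Filter

-- MVT for sin
lemma sin_slope_bounds {a b : ℝ} (h0 : 0 ≤ a) (hab : a ≤ b) (hb : b ≤ π / 2) :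
    (b - a) * Real.cos b ≤ Real.sin b - Real.sin a ∧
      Real.sin b - Real.sin a ≤ (b - a) * Real.cos a := by
  rcases eq_or_lt_of_le hab with rfl | hab'
  · simp
  obtain ⟨c, hc, hc'⟩ := exists_hasDerivAt_eq_slope Real.sin Real.cos hab'
      (Real.continuous_sin.continuousOn) (fun x _ => Real.hasDerivAt_sin x)
  have hcb : Real.cos b ≤ Real.cos c :=
    Real.cos_le_cos_of_nonneg_of_le_pi (le_trans h0 hc.1.le)
      (le_trans hb (by linarith [Real.pi_pos])) hc.2.le
  have hca : Real.cos c ≤ Real.cos a :=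
    Real.cos_le_cos_of_nonneg_of_le_pi h0
      (le_trans (hc.2.le.trans hb) (by linarith [Real.pi_pos])) hc.1.le
  have hba : (0:ℝ) < b - a := by linarith
  have : Real.sin b - Real.sin a = (b - a) * Real.cos c := by
    field_simp at hc'; linarith [hc']
  constructor
  · rw [this]; nlinarith
  · rw [this]; nlinarith

lemma arcsin_sub_le {a b : ℝ} (ha : 0 ≤ a) (hab : a ≤ b) (hb : b < 1) :
    Real.arcsin b - Real.arcsin a ≤ (b - a) / Real.sqrt (1 - b ^ 2) := by
  have hb1 : -1 ≤ b := by linarith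
  have ha1 : -1 ≤ a := by linarith
  have hsq : (0:ℝ) < 1 - b ^ 2 := by nlinarith
  have hs : (0:ℝ) < Real.sqrt (1 - b ^ 2) := Real.sqrt_pos.2 hsq
  have h := (sin_slope_bounds (Real.arcsin_nonneg.2 ha)
      (Real.monotone_arcsin hab) (Real.arcsin_le_pi_div_two b)).1
  rw [Real.sin_arcsin hb1 hb.le, Real.sin_arcsin ha1 (hab.trans hb.le),
      Real.cos_arcsin] at h
  rw [le_div_iff₀ hs]
  linarith

lemma le_arcsin_sub {a b : ℝ} (ha : 0 ≤ a) (hab : a ≤ b) (hb : b ≤ 1) (ha1 : a < 1) :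
    (b - a) / Real.sqrt (1 - a ^ 2) ≤ Real.arcsin b - Real.arcsin a := by
  have hsq : (0:ℝ) < 1 - a ^ 2 := by nlinarith
  have hs : (0:ℝ) < Real.sqrt (1 - a ^ 2) := Real.sqrt_pos.2 hsq
  have h := (sin_slope_bounds (Real.arcsin_nonneg.2 ha)
      (Real.monotone_arcsin hab) (Real.arcsin_le_pi_div_two b)).2
  rw [Real.sin_arcsin (by linarith) hb, Real.sin_arcsin (by linarith) (hab.trans hb),
      Real.cos_arcsin] at h
  rw [div_le_iff₀ hs]
  linarith

noncomputable def term (q : ℝ) (k : ℕ) : ℝ :=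
  (1 - q ^ 2) * q ^ k / Real.sqrt (1 - q ^ (2 * (k + 1)))

lemma term_eq (q : ℝ) (k : ℕ) :
    term q k = (1 + q) * (q ^ k - q ^ (k + 1)) / Real.sqrt (1 - (q ^ (k + 1)) ^ 2) := by
  have e1 : q ^ (2 * (k + 1)) = (q ^ (k + 1)) ^ 2 := by
    rw [← pow_mul, mul_comm]
  have e2 : (1 - q ^ 2) * q ^ k = (1 + q) * (q ^ k - q ^ (k + 1)) := by
    rw [pow_succ]; ring
  rw [term, e1, e2]

section Fixedq

variable {q : ℝ} (hq0 : 0 < q) (hq1 : q < 1)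

include hq0 hq1

lemma pow_lt_one'' (k : ℕ) : q ^ (k + 1) < 1 :=
  pow_lt_one₀ hq0.le hq1 (Nat.succ_ne_zero k)

lemma sq_pow_pos (k : ℕ) : (0 : ℝ) < 1 - (q ^ (k + 1)) ^ 2 := by
  have h := pow_lt_one'' hq0 hq1 k
  have h0 : (0:ℝ) ≤ q ^ (k+1) := pow_nonneg hq0.le _
  nlinarith

lemma term_nonneg (k : ℕ) : 0 ≤ term q k := by
  rw [term_eq]
  apply div_nonneg _ (Real.sqrt_nonneg _)
  have : q ^ (k + 1) ≤ q ^ k := pow_le_pow_of_le_one hq0.le hq1.le (Nat.le_succ k)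
  nlinarith

lemma term_upper (k : ℕ) :
    term q k ≤ (1 + q) * (Real.arcsin (q ^ k) - Real.arcsin (q ^ (k + 1))) := by
  have h := le_arcsin_sub (a := q ^ (k + 1)) (b := q ^ k) (pow_nonneg hq0.le _)
    (pow_le_pow_of_le_one hq0.le hq1.le (Nat.le_succ k))
    (pow_le_one₀ hq0.le hq1.le) (pow_lt_one'' hq0 hq1 k)
  rw [term_eq, mul_div_assoc]
  exact mul_le_mul_of_nonneg_left h (by linarith)

lemma term_lower (k : ℕ) :
    (1 + q) * (Real.arcsin (q ^ (k + 1)) - Real.arcsin (q ^ (k + 2))) ≤ term q k := by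
  have h := arcsin_sub_le (a := q ^ (k + 2)) (b := q ^ (k + 1)) (pow_nonneg hq0.le _)
    (pow_le_pow_of_le_one hq0.le hq1.le (Nat.le_succ (k+1))) (pow_lt_one'' hq0 hq1 k)
  have hs : (0:ℝ) < Real.sqrt (1 - (q ^ (k + 1)) ^ 2) :=
    Real.sqrt_pos.2 (sq_pow_pos hq0 hq1 k)
  rw [term_eq]
  have hnum : (1 + q) * (q ^ (k + 1) - q ^ (k + 2)) ≤ (1 + q) * (q ^ k - q ^ (k + 1)) := by
    have e1 : q ^ (k+1) = q ^ k * q := pow_succ q k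
    have e2 : q ^ (k+2) = q ^ (k+1) * q := pow_succ q (k+1)
    have hd : 0 ≤ q ^ k - q ^ (k + 1) := by
      have : q ^ (k + 1) ≤ q ^ k := pow_le_pow_of_le_one hq0.le hq1.le (Nat.le_succ k)
      linarith
    rw [e2, e1] at *
    nlinarith [mul_nonneg (mul_nonneg (show (0:ℝ) ≤ 1 + q by linarith) hd)
      (show (0:ℝ) ≤ 1 - q by linarith)]
  calc (1 + q) * (Real.arcsin (q ^ (k + 1)) - Real.arcsin (q ^ (k + 2)))
      ≤ (1 + q) * ((q ^ (k + 1) - q ^ (k + 2)) / Real.sqrt (1 - (q ^ (k + 1)) ^ 2)) :=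
        mul_le_mul_of_nonneg_left h (by linarith)
    _ = (1 + q) * (q ^ (k + 1) - q ^ (k + 2)) / Real.sqrt (1 - (q ^ (k + 1)) ^ 2) := by
        rw [mul_div_assoc]
    _ ≤ (1 + q) * (q ^ k - q ^ (k + 1)) / Real.sqrt (1 - (q ^ (k + 1)) ^ 2) :=
        by gcongr

lemma term_le_sqrt (k : ℕ) : term q k ≤ Real.sqrt (1 - q ^ 2) := by
  have hsq : (0:ℝ) < 1 - q ^ 2 := by nlinarith
  have hs : (0:ℝ) < Real.sqrt (1 - q ^ 2) := Real.sqrt_pos.2 hsq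
  have hle : (1:ℝ) - q ^ 2 ≤ 1 - (q ^ (k + 1)) ^ 2 := by
    have : (q ^ (k + 1)) ^ 2 ≤ q ^ 2 := by
      calc (q ^ (k + 1)) ^ 2 = q ^ ((k + 1) * 2) := by rw [← pow_mul]
        _ ≤ q ^ 2 := pow_le_pow_of_le_one hq0.le hq1.le (by omega)
    linarith
  have hss : Real.sqrt (1 - q ^ 2) ≤ Real.sqrt (1 - (q ^ (k + 1)) ^ 2) :=
    Real.sqrt_le_sqrt hle
  have e1 : q ^ (2 * (k + 1)) = (q ^ (k + 1)) ^ 2 := by rw [← pow_mul, mul_comm]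
  have hnum : (1 - q ^ 2) * q ^ k ≤ 1 - q ^ 2 := by
    have h1 : q ^ k ≤ 1 := pow_le_one₀ hq0.le hq1.le
    nlinarith
  calc term q k = (1 - q ^ 2) * q ^ k / Real.sqrt (1 - (q ^ (k + 1)) ^ 2) := by
        rw [term, e1]
    _ ≤ (1 - q ^ 2) * q ^ k / Real.sqrt (1 - q ^ 2) := by
        apply div_le_div_of_nonneg_left _ hs hss
        positivity
    _ ≤ (1 - q ^ 2) / Real.sqrt (1 - q ^ 2) := by gcongr
    _ = Real.sqrt (1 - q ^ 2) := Real.div_sqrt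

lemma tendsto_arcsin_pow : Filter.Tendsto (fun n : ℕ => Real.arcsin (q ^ n))
    Filter.atTop (nhds 0) := by
  have h : Filter.Tendsto (fun n : ℕ => q ^ n) Filter.atTop (nhds 0) :=
    tendsto_pow_atTop_nhds_zero_of_lt_one hq0.le hq1
  have h2 := (Real.continuous_arcsin.tendsto 0).comp h
  rw [Real.arcsin_zero] at h2
  exact h2

lemma hasSum_tele1 :
    HasSum (fun k : ℕ => Real.arcsin (q ^ k) - Real.arcsin (q ^ (k + 1))) (π / 2) := by
  rw [hasSum_iff_tendsto_nat_of_nonneg]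
  · have e : ∀ n : ℕ, ∑ i ∈ Finset.range n,
        (Real.arcsin (q ^ i) - Real.arcsin (q ^ (i + 1)))
        = π / 2 - Real.arcsin (q ^ n) := by
      intro n
      rw [Finset.sum_range_sub' (fun k => Real.arcsin (q ^ k)) n]
      simp [Real.arcsin_one]
    simp only [e]
    simpa using tendsto_const_nhds.sub (tendsto_arcsin_pow hq0 hq1)
  · intro i
    have : q ^ (i + 1) ≤ q ^ i := pow_le_pow_of_le_one hq0.le hq1.le (Nat.le_succ i)
    have := Real.monotone_arcsin this
    linarith

lemma hasSum_tele2 :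
    HasSum (fun k : ℕ => Real.arcsin (q ^ (k + 1)) - Real.arcsin (q ^ (k + 2)))
      (Real.arcsin q) := by
  rw [hasSum_iff_tendsto_nat_of_nonneg]
  · have e : ∀ n : ℕ, ∑ i ∈ Finset.range n,
        (Real.arcsin (q ^ (i + 1)) - Real.arcsin (q ^ (i + 2)))
        = Real.arcsin q - Real.arcsin (q ^ (n + 1)) := by
      intro n
      rw [Finset.sum_range_sub' (fun k => Real.arcsin (q ^ (k + 1))) n]
      simp
    simp only [e]
    have h2 : Filter.Tendsto (fun n : ℕ => Real.arcsin (q ^ (n + 1)))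
        Filter.atTop (nhds 0) :=
      (tendsto_arcsin_pow hq0 hq1).comp (Filter.tendsto_add_atTop_nat 1)
    simpa using tendsto_const_nhds.sub h2
  · intro i
    have : q ^ (i + 2) ≤ q ^ (i + 1) := pow_le_pow_of_le_one hq0.le hq1.le (by omega)
    have := Real.monotone_arcsin this
    linarith

lemma summable_term : Summable (term q) :=
  Summable.of_nonneg_of_le (term_nonneg hq0 hq1) (term_upper hq0 hq1)
    ((hasSum_tele1 hq0 hq1).mul_left (1 + q)).summable

lemma tsum_term_le : ∑' k, term q k ≤ (1 + q) * (π / 2) :=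
  le_of_le_of_eq
    (Summable.tsum_le_tsum (term_upper hq0 hq1) (summable_term hq0 hq1)
      ((hasSum_tele1 hq0 hq1).mul_left (1 + q)).summable)
    ((hasSum_tele1 hq0 hq1).mul_left (1 + q)).tsum_eq

lemma le_tsum_term : (1 + q) * Real.arcsin q ≤ ∑' k, term q k :=
  le_of_eq_of_le ((hasSum_tele2 hq0 hq1).mul_left (1 + q)).tsum_eq.symm
    (Summable.tsum_le_tsum (term_lower hq0 hq1)
      ((hasSum_tele2 hq0 hq1).mul_left (1 + q)).summable (summable_term hq0 hq1))

end Fixedq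

/-- The image `ι_q(X_q) ⊆ ℝ` of `X_q` under `ι_q(x) = d_q(1,x) − π/2`; concretely it is
`{ ∑_{k=0}^{n−1} 1/ρ_q(k) − π/2 : n ∈ ℕ₀ } ∪ { ∑_{k=0}^∞ 1/ρ_q(k) − π/2 }`, where
`1/ρ_q(k) = (1−q²)·q^k/√(1 − q^{2(k+1)})`. -/
noncomputable def iotaImage (q : ℝ) : Set ℝ :=
  {y : ℝ | ∃ n : ℕ,
      y = (∑ k ∈ Finset.range n,
            (1 - q ^ 2) * q ^ k / Real.sqrt (1 - q ^ (2 * (k + 1)))) - Real.pi / 2} ∪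
  {(∑' k : ℕ, (1 - q ^ 2) * q ^ k / Real.sqrt (1 - q ^ (2 * (k + 1)))) - Real.pi / 2}


lemma partial_mem (q : ℝ) (n : ℕ) :
    (∑ k ∈ Finset.range n, term q k) - π / 2 ∈ iotaImage q :=
  Or.inl ⟨n, rfl⟩

lemma tsum_mem' (q : ℝ) :
    (∑' k : ℕ, term q k) - π / 2 ∈ iotaImage q :=
  Or.inr rfl

lemma key {q : ℝ} (hq0 : 0 < q) (hq1 : q < 1) :
    hausdorffDist (iotaImage q) (Set.Icc (-(π / 2)) (π / 2)) ≤
      Real.sqrt (1 - q ^ 2) + (π - (1 + q) * Real.arcsin q) := by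
  have harc0 : 0 ≤ Real.arcsin q := Real.arcsin_nonneg.2 hq0.le
  have harc2 : Real.arcsin q ≤ π / 2 := Real.arcsin_le_pi_div_two q
  have hπr : 0 ≤ π - (1 + q) * Real.arcsin q := by nlinarith
  have hr : 0 ≤ Real.sqrt (1 - q ^ 2) + (π - (1 + q) * Real.arcsin q) :=
    add_nonneg (Real.sqrt_nonneg _) hπr
  have hsum := summable_term hq0 hq1
  set S : ℕ → ℝ := fun n => ∑ k ∈ Finset.range n, term q k with hS
  set T : ℝ := ∑' k, term q k with hT
  have hTle : T ≤ (1 + q) * (π / 2) := tsum_term_le hq0 hq1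
  have hTpi : T ≤ π := by nlinarith [Real.pi_pos]
  have hTge : (1 + q) * Real.arcsin q ≤ T := le_tsum_term hq0 hq1
  have hSle : ∀ n, S n ≤ T := fun n =>
    Summable.sum_le_tsum (Finset.range n) (fun i _ => term_nonneg hq0 hq1 i) hsum
  have hSnn : ∀ n, 0 ≤ S n := fun n =>
    Finset.sum_nonneg (fun i _ => term_nonneg hq0 hq1 i)
  have hTnn : 0 ≤ T := le_trans (hSnn 0) (hSle 0)
  have hiota : iotaImage q = {y : ℝ | ∃ n, y = S n - π / 2} ∪ {T - π / 2} := rfl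
  have hAB : ∀ x ∈ iotaImage q, x ∈ Set.Icc (-(π / 2)) (π / 2) := by
    intro x hx
    rw [hiota] at hx
    rcases hx with ⟨n, rfl⟩ | hx
    · exact ⟨by linarith [hSnn n], by linarith [(hSle n).trans hTpi]⟩
    · simp only [Set.mem_singleton_iff] at hx
      subst hx
      exact ⟨by linarith, by linarith⟩
  apply hausdorffDist_le_of_infDist hr
  · intro x hx
    rw [infDist_zero_of_mem (hAB x hx)]
    exact hr
  · intro y hy
    rw [Set.mem_Icc] at hy
    by_cases hE : ∃ n, y ≤ S n - π / 2
    · rcases Nat.find_spec hE with hn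
      cases hfind : Nat.find hE with
      | zero =>
        rw [hfind] at hn
        have hS0 : S 0 = 0 := by simp [hS]
        have hy0 : y = S 0 - π / 2 := by rw [hS0]; rw [hS0] at hn; linarith [hy.1]
        have hmem : S 0 - π / 2 ∈ iotaImage q := partial_mem q 0
        calc infDist y (iotaImage q) ≤ dist y (S 0 - π / 2) :=
              infDist_le_dist_of_mem hmem
          _ = 0 := by rw [hy0, dist_self]
          _ ≤ _ := hr
      | succ m =>
        have hm : ¬ (y ≤ S m - π / 2) := Nat.find_min hE (by omega)
        rw [hfind] at hn
        push_neg at hm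
        have hdiff : S (m + 1) - S m = term q m := by
          simp [hS, Finset.sum_range_succ]
        have hgap : term q m ≤ Real.sqrt (1 - q ^ 2) := term_le_sqrt hq0 hq1 m
        have hd : dist y (S (m + 1) - π / 2) ≤ Real.sqrt (1 - q ^ 2) := by
          rw [Real.dist_eq, abs_le]
          constructor <;> nlinarith [Real.sqrt_nonneg (1 - q ^ 2)]
        have hmem : S (m + 1) - π / 2 ∈ iotaImage q := partial_mem q (m + 1)
        exact le_trans (le_trans (infDist_le_dist_of_mem hmem) hd) (by linarith)
    · push_neg at hE
      have hTy : T ≤ y + π / 2 := by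
        apply le_of_tendsto' hsum.hasSum.tendsto_sum_nat
        intro n
        have := hE n
        simp only [hS] at this ⊢
        linarith
      have hd : dist y (T - π / 2) ≤ π - (1 + q) * Real.arcsin q := by
        rw [Real.dist_eq, abs_le]
        constructor <;> nlinarith
      have hmem : T - π / 2 ∈ iotaImage q := tsum_mem' q
      exact le_trans (le_trans (infDist_le_dist_of_mem hmem) hd)
        (by nlinarith [Real.sqrt_nonneg (1 - q ^ 2)])

/-- The Hausdorff distance in `ℝ` between `ι_q(X_q)` and the interval `[−π/2, π/2]` tends to
`0` as `q → 1⁻`. -/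
theorem stmt_15 :
    Filter.Tendsto
      (fun q : ℝ =>
        Metric.hausdorffDist (iotaImage q) (Set.Icc (-(Real.pi / 2)) (Real.pi / 2)))
      (nhdsWithin 1 (Set.Ioo 0 1)) (nhds 0) := by

  have hc : Continuous fun q : ℝ =>
      Real.sqrt (1 - q ^ 2) + (π - (1 + q) * Real.arcsin q) := by
    apply Continuous.add
    · exact Real.continuous_sqrt.comp (by continuity)
    · exact continuous_const.sub ((continuous_const.add continuous_id).mul
        Real.continuous_arcsin)
  have hF : Filter.Tendsto (fun q : ℝ =>
      Real.sqrt (1 - q ^ 2) + (π - (1 + q) * Real.arcsin q))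
      (nhdsWithin 1 (Set.Ioo 0 1)) (nhds 0) := by
    have h1 := (hc.tendsto 1).mono_left
      (nhdsWithin_le_nhds (s := Set.Ioo (0:ℝ) 1))
    have hval : Real.sqrt (1 - (1:ℝ) ^ 2) + (π - (1 + 1) * Real.arcsin 1) = 0 := by
      rw [Real.arcsin_one, show (1:ℝ) - 1 ^ 2 = 0 by norm_num, Real.sqrt_zero]; ring
    rwa [hval] at h1
  apply tendsto_of_tendsto_of_tendsto_of_le_of_le' tendsto_const_nhds hF
  · filter_upwards with q
    exact hausdorffDist_nonneg
  · filter_upwards [eventually_mem_nhdsWithin] with q hq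
    exact key hq.1 hq.2
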